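/- Let a, b, c be the tree automorphisms of the binary tree defined by the wreath recursions a = σ(b,a), b = (c,b), c = (b,a) (automaton number 857). Then the element b has infinite order; indeed, the forward orbit of the boundary point 010000… under b is infinite. -/
import Mathlib


/-- An invertible automaton over the two-letter alphabet `Bool`:
a set of states `Q`, a transition map and an output map such that each state
acts on the alphabet by a permutation. -/
structure BinAutomaton (Q : Type*) where
  trans : Q → Bool → Q
  out : Q → Bool → Bool
  out_bij : ∀ q, Function.Bijective (out q)

namespace BinAutomaton

variable {Q : Type*} (A : BinAutomaton Q)

/-- The action of a state on finite binary words: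
`q(xw) = ρ(q,x) · (τ(q,x))(w)`. -/
def act : Q → List Bool → List Bool
  | _, [] => []
  | q, x :: w => A.out q x :: act (A.trans q x) w

theorem act_injective (q : Q) : Function.Injective (A.act q) := by
  intro u
  induction u generalizing q with
  | nil =>
    intro v h
    cases v with
    | nil => rfl
    | cons y v => simp [act] at h
  | cons x u ih =>
    intro v h
    cases v with
    | nil => simp [act] at h
    | cons y v =>
      simp only [act, List.cons.injEq] at h
      obtain ⟨h1, h2⟩ := h
      obtain rfl : x = y := (A.out_bij q).1 h1
      rw [ih _ h2]

theorem act_surjective (q : Q) : Function.Surjective (A.act q) := by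
  intro v
  induction v generalizing q with
  | nil => exact ⟨[], rfl⟩
  | cons y v ih =>
    obtain ⟨x, hx⟩ := (A.out_bij q).2 y
    obtain ⟨w, hw⟩ := ih (A.trans q x)
    exact ⟨x :: w, by simp [act, hx, hw]⟩

/-- The tree automorphism defined by the state `q`. -/
noncomputable def perm (q : Q) : Equiv.Perm (List Bool) :=
  Equiv.ofBijective (A.act q) ⟨A.act_injective q, A.act_surjective q⟩

/-- The group generated by the automaton: the subgroup of the group of
bijections of the binary tree generated by the states. -/
noncomputable def autGroup : Subgroup (Equiv.Perm (List Bool)) :=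
  Subgroup.closure (Set.range A.perm)

end BinAutomaton

/-- Helper constructing a 3-state automaton from the sections at `0`, the
sections at `1`, and the activity of each state. -/
def mkAut3 (t0 t1 : Fin 3 → Fin 3) (actv : Fin 3 → Bool) : BinAutomaton (Fin 3) where
  trans q x := cond x (t1 q) (t0 q)
  out q x := xor (actv q) x
  out_bij q := by
    have h : ∀ b : Bool, Function.Bijective fun x => xor b x := by decide
    exact h (actv q)

namespace BinAutomaton

variable {Q : Type*} (A : BinAutomaton Q)

/-- The state reached after reading a finite word. -/
def run : Q → List Bool → Q
  | q, [] => q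
  | q, x :: w => run (A.trans q x) w

/-- The canonical extension of the action of a state to the boundary of the
tree (the space of infinite binary sequences): the `n`-th output letter is
produced by the state reached after reading the first `n` input letters. -/
def actStream (q : Q) (s : Stream' Bool) : Stream' Bool :=
  fun n => A.out (A.run q (Stream'.take n s)) (s n)

end BinAutomaton

/-- Automaton number 857:
`a = σ(b,a)`, `b = (c,b)`, `c = (b,a)` (states `0 = a`, `1 = b`, `2 = c`). -/
def A857 : BinAutomaton (Fin 3) :=
  mkAut3 ![1, 2, 1] ![0, 1, 0] ![true, false, false]

noncomputable def b : Equiv.Perm (List Bool) := A857.perm 1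

/-- The boundary point `010000…`. -/
def pt : Stream' Bool := fun n => decide (n = 1)

section Aux857

open Stream'

/-- The stream of binary digits of a natural number. -/
def natStream (m : ℕ) : Stream' Bool := fun i => m.testBit i

theorem natStream_injective : Function.Injective natStream := fun _ _ h =>
  Nat.eq_of_testBit_eq fun i => congrFun h i

theorem natStream_cons (m : ℕ) :
    natStream m = (m.testBit 0) :: natStream (m / 2) := by
  funext i
  cases i with
  | zero => rfl
  | succ n => exact Nat.testBit_succ m n

theorem BinAutomaton.actStream_cons {Q : Type*} (A : BinAutomaton Q) (q : Q)
    (x : Bool) (s : Stream' Bool) :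
    A.actStream q (x :: s) = (A.out q x) :: A.actStream (A.trans q x) s := by
  funext n
  cases n with
  | zero => rfl
  | succ n => rfl

/-- The numeric version of the action of the states of automaton 857 on
binary-digit streams. -/
def F857 : Fin 3 → ℕ → ℕ
  | q, 0 => if q = 0 then 1 else 0
  | q, m+1 =>
    2 * F857 (A857.trans q ((m+1).testBit 0)) ((m+1)/2)
      + (A857.out q ((m+1).testBit 0)).toNat
decreasing_by exact Nat.div_lt_self (Nat.succ_pos m) one_lt_two

theorem F857_eq (q : Fin 3) (m : ℕ) :
    F857 q m = 2 * F857 (A857.trans q (m.testBit 0)) (m/2)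
      + (A857.out q (m.testBit 0)).toNat := by
  cases m with
  | zero => fin_cases q <;> simp [F857] <;> decide
  | succ m => rw [F857]

theorem toNat_bit0 (a : ℕ) (x : Bool) : (2 * a + x.toNat).testBit 0 = x := by
  rw [Nat.testBit_zero]
  cases x <;> simp <;> omega

theorem toNat_bitdiv (a : ℕ) (x : Bool) : (2 * a + x.toNat) / 2 = a := by
  cases x <;> simp <;> omega

theorem actStream_natStream_get :
    ∀ (n : ℕ) (q : Fin 3) (m : ℕ),
      A857.actStream q (natStream m) n = natStream (F857 q m) n
  | 0, q, m => by
    rw [natStream_cons m, A857.actStream_cons]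
    show A857.out q (m.testBit 0) = (F857 q m).testBit 0
    rw [F857_eq, toNat_bit0]
  | n+1, q, m => by
    rw [natStream_cons m, A857.actStream_cons]
    show A857.actStream (A857.trans q (m.testBit 0)) (natStream (m/2)) n
      = (F857 q m).testBit (n+1)
    rw [Nat.testBit_succ, F857_eq q m, toNat_bitdiv]
    exact actStream_natStream_get n _ _

theorem actStream_natStream (q : Fin 3) (m : ℕ) :
    A857.actStream q (natStream m) = natStream (F857 q m) :=
  funext fun n => actStream_natStream_get n q m

theorem testBit_even {m : ℕ} (h : m % 2 = 0) : m.testBit 0 = false := by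
  simp [Nat.testBit_zero, h]

theorem testBit_odd {m : ℕ} (h : m % 2 = 1) : m.testBit 0 = true := by
  simp [Nat.testBit_zero, h]

theorem F857_0_even {m : ℕ} (h : m % 2 = 0) : F857 0 m = 2 * F857 1 (m/2) + 1 := by
  rw [F857_eq, testBit_even h]; rfl

theorem F857_0_odd {m : ℕ} (h : m % 2 = 1) : F857 0 m = 2 * F857 0 (m/2) := by
  rw [F857_eq, testBit_odd h]; rfl

theorem F857_1_even {m : ℕ} (h : m % 2 = 0) : F857 1 m = 2 * F857 2 (m/2) := by
  rw [F857_eq, testBit_even h]; rfl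

theorem F857_1_odd {m : ℕ} (h : m % 2 = 1) : F857 1 m = 2 * F857 1 (m/2) + 1 := by
  rw [F857_eq, testBit_odd h]; rfl

theorem F857_2_even {m : ℕ} (h : m % 2 = 0) : F857 2 m = 2 * F857 1 (m/2) := by
  rw [F857_eq, testBit_even h]; rfl

theorem F857_2_odd {m : ℕ} (h : m % 2 = 1) : F857 2 m = 2 * F857 0 (m/2) + 1 := by
  rw [F857_eq, testBit_odd h]; rfl

theorem F857_ge (m : ℕ) : m + 1 ≤ F857 0 m ∧ m ≤ F857 1 m ∧ m ≤ F857 2 m := by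
  induction m using Nat.strong_induction_on with
  | _ m ih =>
    match m with
    | 0 => refine ⟨?_, ?_, ?_⟩ <;> simp [F857]
    | m+1 =>
      obtain ⟨h0, h1, h2⟩ := ih ((m+1)/2) (Nat.div_lt_self (Nat.succ_pos m) one_lt_two)
      rcases Nat.mod_two_eq_zero_or_one (m+1) with h | h
      · rw [F857_0_even h, F857_1_even h, F857_2_even h]
        refine ⟨?_, ?_, ?_⟩ <;> omega
      · rw [F857_0_odd h, F857_1_odd h, F857_2_odd h]
        refine ⟨?_, ?_, ?_⟩ <;> omega

/-- The orbit of `2` under the numeric version of `b`. -/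
def v857 : ℕ → ℕ
  | 0 => 2
  | n+1 => F857 1 (v857 n)

theorem F857_1_form (t : ℕ) : F857 1 (4*t+2) = 4 * F857 0 t + 2 := by
  rw [F857_1_even (by omega), show (4*t+2)/2 = 2*t+1 by omega,
    F857_2_odd (by omega), show (2*t+1)/2 = t by omega]
  ring

theorem v857_form (n : ℕ) : ∃ t, v857 n = 4*t+2 := by
  induction n with
  | zero => exact ⟨0, rfl⟩
  | succ n ih =>
    obtain ⟨t, ht⟩ := ih
    exact ⟨F857 0 t, by rw [v857, ht, F857_1_form]⟩

theorem v857_strictMono : StrictMono v857 := by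
  apply strictMono_nat_of_lt_succ
  intro n
  obtain ⟨t, ht⟩ := v857_form n
  have h0 := (F857_ge t).1
  rw [show v857 (n+1) = F857 1 (v857 n) from rfl, ht, F857_1_form]
  omega

theorem pt_eq : pt = natStream 2 := by
  funext i
  show decide (i = 1) = Nat.testBit (2^1) i
  rw [Nat.testBit_two_pow]
  exact decide_eq_decide.mpr eq_comm

theorem iter_pt (n : ℕ) : (A857.actStream 1)^[n] pt = natStream (v857 n) := by
  induction n with
  | zero => exact pt_eq
  | succ n ih => rw [Function.iterate_succ_apply', ih, actStream_natStream]; rfl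

theorem BinAutomaton.act_take {Q : Type*} (A : BinAutomaton Q) :
    ∀ (n : ℕ) (q : Q) (s : Stream' Bool),
      A.act q (Stream'.take n s) = Stream'.take n (A.actStream q s)
  | 0, _, _ => rfl
  | n+1, q, s => by
    conv_rhs => rw [← Stream'.eta s]
    rw [A.actStream_cons, Stream'.take_succ_cons, Stream'.take_succ]
    show A.out q s.head :: A.act (A.trans q s.head) (Stream'.take n s.tail) = _
    rw [A.act_take n]

theorem act_iterate_take (k n : ℕ) (s : Stream' Bool) :
    (A857.act 1)^[k] (Stream'.take n s) = Stream'.take n ((A857.actStream 1)^[k] s) := by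
  induction k with
  | zero => rfl
  | succ k ih =>
    rw [Function.iterate_succ_apply', Function.iterate_succ_apply', ih, A857.act_take]

theorem get_of_take_eq :
    ∀ (n : ℕ) (s t : Stream' Bool), Stream'.take n s = Stream'.take n t →
      ∀ i, i < n → s i = t i
  | 0, _, _, _, i, hi => absurd hi (Nat.not_lt_zero i)
  | n+1, s, t, h, i, hi => by
    rw [Stream'.take_succ, Stream'.take_succ, List.cons.injEq] at h
    cases i with
    | zero => exact h.1
    | succ i => exact get_of_take_eq n s.tail t.tail h.2 i (by omega)

end Aux857

/-- In the group generated by automaton 857 the element `b` has infinite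
order; indeed the forward orbit of the boundary point `010⁰⁰…` under `b` is
infinite. -/
theorem automaton857_b_has_infinite_order :
    ¬ IsOfFinOrder b ∧
    Set.Infinite (Set.range fun n : ℕ => (A857.actStream 1)^[n] pt) := by
  constructor
  · intro hfin
    obtain ⟨k, hk, hbk⟩ := isOfFinOrder_iff_pow_eq_one.mp hfin
    have hvk : v857 0 < v857 k := v857_strictMono hk
    have hne : (A857.actStream 1)^[k] pt ≠ pt := by
      intro h
      rw [iter_pt, show pt = natStream (v857 0) from pt_eq] at h
      have := natStream_injective h
      omega
    obtain ⟨i, hi⟩ := Function.ne_iff.mp hne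
    have hw : (A857.act 1)^[k] (Stream'.take (i+1) pt) = Stream'.take (i+1) pt := by
      have h1 : (b ^ k) (Stream'.take (i+1) pt) = Stream'.take (i+1) pt := by
        rw [hbk]; rfl
      rw [Equiv.Perm.coe_pow] at h1
      exact h1
    rw [act_iterate_take] at hw
    exact hi (get_of_take_eq (i+1) _ _ hw i (Nat.lt_succ_self i))
  · apply Set.infinite_range_of_injective
    intro m n h
    simp only [iter_pt] at h
    exact v857_strictMono.injective (natStream_injective h)
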